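/- The updated matrix C' = C − q C x xᵀ C with q = (xᵀ1 + xᵀCx)⁻¹ is positive definite whenever C is positive definite and x ∈ {0,1}^u is nonzero. -/

import Mathlib

open Matrix

lemma vecMulVec_mulVec' {u : ℕ} (a b y : Fin u → ℝ) :
    (vecMulVec a b) *ᵥ y = (b ⬝ᵥ y) • a := by
  ext i
  simp [mulVec, dotProduct, vecMulVec_apply, Finset.mul_sum, mul_comm, mul_left_comm]

/-- The rank-one downdate C' = C − q C x xᵀ C with q = (xᵀ1 + xᵀCx)⁻¹ is
positive definite whenever C is positive definite and x is a nonzero binary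
vector. -/
theorem downdate_posDef (u : ℕ) (C : Matrix (Fin u) (Fin u) ℝ) (x : Fin u → ℝ)
    (hC : C.PosDef) (hx01 : ∀ j, x j = 0 ∨ x j = 1) (hx : x ≠ 0) :
    (C - (x ⬝ᵥ (1 : Fin u → ℝ) + x ⬝ᵥ C.mulVec x)⁻¹ •
        vecMulVec (C.mulVec x) (vecMul x C)).PosDef := by
  have hCt : Cᵀ = C := hC.1
  have hvec : vecMul x C = C *ᵥ x := by
    rw [← hCt, vecMul_transpose, hCt]
  have hs : 0 < x ⬝ᵥ (1 : Fin u → ℝ) := by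
    obtain ⟨j, hj⟩ : ∃ j, x j ≠ 0 := Function.ne_iff.mp hx
    have hj1 : x j = 1 := (hx01 j).resolve_left hj
    have : ∀ i ∈ Finset.univ, 0 ≤ x i * (1 : Fin u → ℝ) i := by
      intro i _
      rcases hx01 i with h | h <;> simp [h]
    calc (0:ℝ) < x j * 1 := by rw [hj1]; norm_num
    _ ≤ x ⬝ᵥ (1 : Fin u → ℝ) :=
      Finset.single_le_sum this (Finset.mem_univ j)
  have ha : 0 < x ⬝ᵥ C *ᵥ x := by simpa using hC.dotProduct_mulVec_pos hx
  set s := x ⬝ᵥ (1 : Fin u → ℝ) with hs_def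
  set a := x ⬝ᵥ C *ᵥ x with ha_def
  have hq : 0 < (s + a)⁻¹ := inv_pos.2 (by linarith)
  rw [posDef_iff_dotProduct_mulVec]
  constructor
  · -- Hermitian
    rw [hvec]
    have hH : ((s + a)⁻¹ • vecMulVec (C *ᵥ x) (C *ᵥ x)).IsHermitian := by
      ext i j
      simp [Matrix.conjTranspose_apply, vecMulVec_apply, mul_comm, mul_left_comm]
    exact hC.1.sub hH
  · intro y hy
    rw [hvec]
    have hc : 0 < y ⬝ᵥ C *ᵥ y := by simpa using hC.dotProduct_mulVec_pos hy
    set b := x ⬝ᵥ C *ᵥ y with hb_def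
    set c := y ⬝ᵥ C *ᵥ y with hc_def
    have hsymm : (C *ᵥ x) ⬝ᵥ y = b := by
      rw [hb_def, dotProduct_mulVec, hvec]
    -- Cauchy-Schwarz: b^2 ≤ a * c
    have hyx : y ⬝ᵥ C *ᵥ x = b := by
      rw [dotProduct_comm, hb_def, dotProduct_mulVec, hvec]
    have hCS : b ^ 2 ≤ a * c := by
      have h0 : 0 ≤ (x - (b / c) • y) ⬝ᵥ C *ᵥ (x - (b / c) • y) :=
        by simpa using hC.posSemidef.dotProduct_mulVec_nonneg (x - (b / c) • y)
      have hexp : (x - (b / c) • y) ⬝ᵥ C *ᵥ (x - (b / c) • y)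
          = a - 2 * (b / c) * b + (b / c) ^ 2 * c := by
        simp only [mulVec_sub, mulVec_smul, dotProduct_sub, sub_dotProduct,
          dotProduct_smul, smul_dotProduct, smul_eq_mul, ← ha_def, ← hc_def, hyx, ← hb_def]
        ring
      rw [hexp] at h0
      have : a - b ^ 2 / c ≥ 0 := by
        have : 2 * (b / c) * b - (b / c) ^ 2 * c = b ^ 2 / c := by
          field_simp; ring
        linarith
      have := (div_le_iff₀ hc).mp (by linarith : b ^ 2 / c ≤ a)
      linarith
    -- compute quadratic form
    have hquad : y ⬝ᵥ (C - (s + a)⁻¹ • vecMulVec (C *ᵥ x) (C *ᵥ x)) *ᵥ y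
        = c - (s + a)⁻¹ * b ^ 2 := by
      rw [sub_mulVec, smul_mulVec, vecMulVec_mulVec', dotProduct_sub]
      simp only [dotProduct_smul, smul_eq_mul, hsymm, hyx, ← hc_def]
      ring
    have hstar : star y = y := funext fun i => rfl
    rw [hstar, hquad]
    have hd : (s + a)⁻¹ * (s + a) = 1 := inv_mul_cancel₀ (by linarith)
    nlinarith [mul_le_mul_of_nonneg_left hCS hq.le]
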